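/- The sequence a(n) = ⌊(n+1)/√2⌋ (with a(k) = 0 for k < 1) satisfies a(a(n) + a(n-1)) = n for all integers n ≥ 1. -/

import Mathlib

open Real

theorem stmt0
    (a : ℤ → ℤ)
    (ha : ∀ n : ℤ, 1 ≤ n → a n = ⌊((n : ℝ) + 1) / Real.sqrt 2⌋)
    (ha0 : ∀ n : ℤ, n < 1 → a n = 0) :
    ∀ n : ℤ, 1 ≤ n → a (a n + a (n - 1)) = n := by
  intro n hn
  set s := Real.sqrt 2 with hs
  have hs2 : s * s = 2 := Real.mul_self_sqrt (by norm_num)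
  have hsnn : 0 ≤ s := Real.sqrt_nonneg 2
  have hs1 : 1 < s := by nlinarith
  have hs32 : s < 3/2 := by nlinarith
  have hspos : 0 < s := by linarith
  set x := ((n : ℝ) + 1) / s with hxdef
  set y := ((n : ℝ)) / s with hydef
  have hxs : x * s = (n : ℝ) + 1 := by rw [hxdef, div_mul_cancel₀ _ hspos.ne']
  have hys : y * s = (n : ℝ) := by rw [hydef, div_mul_cancel₀ _ hspos.ne']
  set k := ⌊x⌋ with hk
  set l := ⌊y⌋ with hl
  have hkx : (k:ℝ) ≤ x := Int.floor_le x
  have hkx' : x < k + 1 := Int.lt_floor_add_one x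
  have hly : (l:ℝ) ≤ y := Int.floor_le y
  have hly' : y < l + 1 := Int.lt_floor_add_one y
  have hn' : (1:ℝ) ≤ (n:ℝ) := by exact_mod_cast hn
  have hxy : x - y = s / 2 := by
    have h1 : (x - y) * s = 1 := by nlinarith
    nlinarith
  have hypos : 0 < y := by nlinarith
  have hx1 : 1 < x := by nlinarith
  have hk1 : 1 ≤ k := by
    rw [hk, Int.le_floor]; exact_mod_cast hx1.le
  have hl0 : 0 ≤ l := by
    rw [hl, Int.le_floor]; exact_mod_cast hypos.le
  -- x is not an integer
  have hxk : (k:ℝ) < x := by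
    rcases lt_or_eq_of_le hkx with h | h
    · exact h
    · exfalso
      apply irrational_sqrt_two
      have hk0 : (k:ℝ) ≠ 0 := by positivity
      refine ⟨(n+1 : ℚ)/(k : ℚ), ?_⟩
      have hks : (k:ℝ) * s = (n:ℝ) + 1 := by rw [h]; exact hxs
      have hk0' : (k : ℚ) ≠ 0 := by exact_mod_cast (by positivity : (k:ℝ) ≠ 0)
      push_cast
      rw [div_eq_iff (by exact_mod_cast hk0)]
      linarith [hks]
  -- k - l ∈ {0, 1}
  have hkl : k = l ∨ k = l + 1 := by
    have h1 : l < k + 1 := by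
      have : (l:ℝ) < (k:ℝ) + 1 := by linarith
      exact_mod_cast this
    have h2 : k < l + 2 := by
      have : (k:ℝ) < (l:ℝ) + 2 := by linarith
      exact_mod_cast this
    omega
  -- a n = k, a (n-1) = l
  have han : a n = k := by rw [ha n hn]
  have han1 : a (n - 1) = l := by
    rcases eq_or_lt_of_le hn with h | h
    · have hn0 : n - 1 < 1 := by omega
      rw [ha0 _ hn0]
      have hy1 : y < 1 := by
        rw [hydef, ← h]
        push_cast
        rw [div_lt_one hspos]
        linarith
      have : l = 0 := by
        rw [hl, Int.floor_eq_zero_iff]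
        exact Set.mem_Ico.mpr ⟨hypos.le, hy1⟩
      omega
    · have hn1 : 1 ≤ n - 1 := by omega
      rw [ha _ hn1, hl, hydef]
      push_cast
      norm_num
  rw [han, han1]
  have hm1 : 1 ≤ k + l := by omega
  rw [ha _ hm1]
  -- show ⌊(k+l+1)/s⌋ = n, i.e. n·s ≤ k+l+1 < (n+1)·s, i.e. 2y ≤ k+l+1 < 2x
  have hns : (n:ℝ) * s = 2 * y := by nlinarith
  have hn1s : ((n:ℝ) + 1) * s = 2 * x := by nlinarith
  have hlow : (n:ℝ) * s ≤ (k:ℝ) + (l:ℝ) + 1 := by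
    rcases hkl with h | h <;>
      have h' : (k:ℝ) = (l:ℝ) ∨ (k:ℝ) = (l:ℝ) + 1 := by
        first
        | (left; exact_mod_cast congrArg (Int.cast : ℤ → ℝ) h)
        | (right; exact_mod_cast congrArg (Int.cast : ℤ → ℝ) h)
    all_goals rcases h' with h' | h' <;> linarith [hns, hxy]
  have hup : (k:ℝ) + (l:ℝ) + 1 < ((n:ℝ) + 1) * s := by
    have h' : (k:ℝ) = (l:ℝ) ∨ (k:ℝ) = (l:ℝ) + 1 := by
      rcases hkl with h | h
      · left; exact_mod_cast congrArg (Int.cast : ℤ → ℝ) h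
      · right; exact_mod_cast congrArg (Int.cast : ℤ → ℝ) h
    rcases h' with h' | h' <;> linarith [hn1s, hxy]
  rw [Int.floor_eq_iff]
  push_cast
  rw [le_div_iff₀ hspos, div_lt_iff₀ hspos]
  constructor
  · linarith
  · linarith
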